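/- In the setup below, the geodesic curvature κ_γ of the timelike pseudo-spherical projection γ and the geodesic curvature κ_g of α satisfy the inequality κ_γ(t)²·sin²(η(t)) ≤ w(t)⁴·κ_g(t)² for all t ∈ ℝ. -/

import Mathlib

open Real

/-- The Minkowski scalar product on `ℝ⁴₁`:
`⟨x,y⟩ = -x₁y₁ + x₂y₂ + x₃y₃ + x₄y₄`. -/
noncomputable def mdot (x y : Fin 4 → ℝ) : ℝ :=
  -(x 0 * y 0) + x 1 * y 1 + x 2 * y 2 + x 3 * y 3

lemma mdot_hasDerivAt {f g : ℝ → Fin 4 → ℝ} {f' g' : Fin 4 → ℝ} {t : ℝ}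
    (hf : HasDerivAt f f' t) (hg : HasDerivAt g g' t) :
    HasDerivAt (fun u => mdot (f u) (g u)) (mdot f' (g t) + mdot (f t) g') t := by
  have hfi : ∀ i, HasDerivAt (fun u => f u i) (f' i) t := fun i => (hasDerivAt_pi.mp hf) i
  have hgi : ∀ i, HasDerivAt (fun u => g u i) (g' i) t := fun i => (hasDerivAt_pi.mp hg) i
  have h := ((((hfi 0).mul (hgi 0)).neg.add ((hfi 1).mul (hgi 1))).add
      ((hfi 2).mul (hgi 2))).add ((hfi 3).mul (hgi 3))
  refine h.congr_deriv ?_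
  simp [mdot]; ring

lemma mdot_symm (x y : Fin 4 → ℝ) : mdot x y = mdot y x := by simp [mdot]; ring

lemma mdot_comb (p u v z : Fin 4 → ℝ) (a0 a1 a2 a3 b0 b1 b2 b3 : ℝ) :
    mdot (a0•p + a1•u + a2•v + a3•z) (b0•p + b1•u + b2•v + b3•z) =
      a0*b0*mdot p p + (a0*b1+a1*b0)*mdot p u + (a0*b2+a2*b0)*mdot p v
      + (a0*b3+a3*b0)*mdot p z + a1*b1*mdot u u + (a1*b2+a2*b1)*mdot u v
      + (a1*b3+a3*b1)*mdot u z + a2*b2*mdot v v + (a2*b3+a3*b2)*mdot v z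
      + a3*b3*mdot z z := by
  simp [mdot, Pi.add_apply, Pi.smul_apply, smul_eq_mul]; ring

lemma mdot_smul_self (a : ℝ) (x : Fin 4 → ℝ) : mdot (a • x) (a • x) = a^2 * mdot x x := by
  simp [mdot, Pi.smul_apply, smul_eq_mul]; ring

lemma matrix_of_mat_apply {m n : Type*} (f : Matrix m n ℝ) (i : m) (j : n) : Matrix.of f i j = f i j := rfl

lemma det_sq_gram (a b c d : Fin 4 → ℝ) (q : ℝ)
    (haa : mdot a a = 1) (hab : mdot a b = 0) (hac : mdot a c = 1) (had : mdot a d = 0)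
    (hbb : mdot b b = -1) (hbc : mdot b c = 0) (hbd : mdot b d = 0)
    (hcc : mdot c c = q) (hcd : mdot c d = 0) (hdd : mdot d d = 1) :
    (Matrix.of ![a, b, c, d]).det ^ 2 = q - 1 := by
  set M : Matrix (Fin 4) (Fin 4) ℝ := Matrix.of ![a, b, c, d] with hM
  set J : Matrix (Fin 4) (Fin 4) ℝ := Matrix.diagonal ![-1, 1, 1, 1] with hJ
  have hprod : M * J * M.transpose =
      Matrix.of !![(1:ℝ), 0, 1, 0; 0, -1, 0, 0; 1, 0, q, 0; 0, 0, 0, 1] := by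
    have ea := haa; have eb := hab; have ec := hac; have ed := had
    have fb := hbb; have fc := hbc; have fd := hbd
    have gc := hcc; have gd := hcd; have hd := hdd
    simp only [mdot] at ea eb ec ed fb fc fd gc gd hd
    ext i j
    simp only [Matrix.mul_apply, Matrix.transpose_apply, Fin.sum_univ_four]
    fin_cases i <;> fin_cases j <;>
      simp [hM, hJ, Matrix.diagonal, Matrix.vecHead, Matrix.vecTail, matrix_of_mat_apply] <;> linarith
  have hdetJ : J.det = -1 := by
    simp [hJ, Matrix.det_diagonal, Fin.prod_univ_succ]
  have hdetG : (Matrix.of !![(1:ℝ), 0, 1, 0; 0, -1, 0, 0; 1, 0, q, 0; 0, 0, 0, 1]).det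
      = 1 - q := by
    simp [Matrix.det_succ_row_zero, Fin.sum_univ_succ, Fin.succAbove, matrix_of_mat_apply]
    ring
  have := congrArg Matrix.det hprod
  rw [Matrix.det_mul, Matrix.det_mul, Matrix.det_transpose, hdetJ, hdetG] at this
  nlinarith [this]

lemma scalar_key (W Wp s c d1 d2 q kc kg : ℝ)
    (hWpos : 0 < W)
    (hW2 : W^2 = s^2 - d1^2)
    (hc2 : s^2 + c^2 = 1)
    (hWWp : W * Wp = s*c*d1 - d1*d2)
    (hk2 : kc^2 = q - 1)
    (hmain : W^6 * kg^2 =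
      (Wp*d1*s + W*(-(d2*s) - (d1)^2*c) - (W)^3*c)^2
      + (-(Wp*d1*c) + W*(d2*c - (d1)^2*s) - (W)^3*s)^2
      - (-(Wp*s) + 2*W*d1*c)^2
      + 2*(-(Wp*d1*c) + W*(d2*c - (d1)^2*s) - (W)^3*s)*(W*s)
      + (W*s)^2*q) :
    kc^2 * s^2 ≤ W^4 * kg^2 := by
  have key : W^4 * (W^4*kg^2 - kc^2*s^2) = W^2 * (2*c*d1^2 - s^2*c - s*d2)^2 := by
    linear_combination W^2*hmain - W^4*s^2*hk2 + ((-1)*c^2*d1^3*d2 + s*c^3*d1^3 + s^2*d1*d2 + (-1)*s^2*d1^3*d2 + (-1)*s^3*c*d1 + s^3*c*d1^3 + W*Wp*c^2*d1^2 + (-1)*W*Wp*s^2 + W*Wp*s^2*d1^2 + (-2)*W^2*c^2*d1*d2 + (2)*W^2*s*c*d1 + (-2)*W^2*s^2*d1*d2)*hWWp + (c^2*d1^2*d2^2 + (-2)*s*c^3*d1^2*d2 + (-1)*s^2*d2^2 + (-1)*s^2*d1^2 + s^2*d1^2*d2^2 + s^2*c^2*d2^2 + (2)*s^2*c^2*d1^2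 + (-2)*s^3*c*d1^2*d2 + s^4 + s^4*d2^2 + (2)*s^4*d1^2 + (-1)*s^4*c^2 + (-1)*s^4*c^2*d1^2 + (-2)*s^6 + (-1)*s^6*d1^2 + s^6*c^2 + s^8 + W^2*c^2*d2^2 + (-4)*W^2*c^2*d1^2 + (2)*W^2*s*c*d2 + W^2*s^2 + W^2*s^2*d2^2 + (-2)*W^2*s^4 + W^2*s^4*c^2 + W^2*s^6 + W^4*c^2*d1^2 + (-2)*W^4*s^2 + W^4*s^2*d1^2 + W^4*s^2*c^2 + W^4*s^4 + W^6*c^2 + W^6*s^2)*hW2 + ((-1)*s^2*d1^4 + s^2*c^2*d1^4 + (-2)*s^3*c*d1^2*d2 + s^4*d2^2 + (2)*s^4*d1^2 + s^4*d1^4 + (-1)*s^6 + (-2)*s^6*d1^2 + s^8)*hc2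
  nlinarith [key, pow_pos hWpos 4, sq_nonneg (2*c*d1^2 - s^2*c - s*d2),
    mul_nonneg (sq_nonneg W) (sq_nonneg (2*c*d1^2 - s^2*c - s*d2))]

/-- Extremal inequality: `κ_γ² sin²(η) ≤ w⁴ κ_g²` for the pseudo-spherical
projection `γ` of a timelike curve `α(t) = cos(η t) • p + sin(η t) • γ(t)` in `S³₁`. -/
theorem extremal_inequality
    (p : Fin 4 → ℝ) (hp : mdot p p = 1)
    (γ : ℝ → Fin 4 → ℝ) (hγsm : ContDiff ℝ (⊤ : ℕ∞) γ)
    (hγ1 : ∀ t, mdot (γ t) (γ t) = 1)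
    (hγp : ∀ t, mdot (γ t) p = 0)
    (hγ' : ∀ t, mdot (deriv γ t) (deriv γ t) = -1)
    (η : ℝ → ℝ) (hηsm : ContDiff ℝ (⊤ : ℕ∞) η)
    (hsinpos : ∀ t, 0 < Real.sin (η t))
    (htimelike : ∀ t, (deriv η t) ^ 2 < Real.sin (η t) ^ 2)
    (w : ℝ → ℝ)
    (hw : ∀ t, w t = Real.sqrt (Real.sin (η t) ^ 2 - (deriv η t) ^ 2))
    (α : ℝ → Fin 4 → ℝ)
    (hα : ∀ t, α t = Real.cos (η t) • p + Real.sin (η t) • γ t)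
    (T : ℝ → Fin 4 → ℝ) (hT : ∀ t, T t = (w t)⁻¹ • deriv α t)
    (N B : ℝ → Fin 4 → ℝ) (hNsm : ContDiff ℝ (⊤ : ℕ∞) N)
    (hBsm : ContDiff ℝ (⊤ : ℕ∞) B)
    (κg τg : ℝ → ℝ) (hκsm : ContDiff ℝ (⊤ : ℕ∞) κg)
    (hτsm : ContDiff ℝ (⊤ : ℕ∞) τg)
    (hκpos : ∀ t, 0 < κg t)
    (hN1 : ∀ t, mdot (N t) (N t) = 1)
    (hB1 : ∀ t, mdot (B t) (B t) = 1)
    (hαT : ∀ t, mdot (α t) (T t) = 0)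
    (hαN : ∀ t, mdot (α t) (N t) = 0)
    (hαB : ∀ t, mdot (α t) (B t) = 0)
    (hTN : ∀ t, mdot (T t) (N t) = 0)
    (hTB : ∀ t, mdot (T t) (B t) = 0)
    (hNB : ∀ t, mdot (N t) (B t) = 0)
    (hF1 : ∀ t, deriv T t = w t • (α t + κg t • N t))
    (hF2 : ∀ t, deriv N t = w t • (κg t • T t + τg t • B t))
    (hF3 : ∀ t, deriv B t = -(w t * τg t) • N t)
    (κγ : ℝ → ℝ)
    (hκγ : ∀ t, κγ t = (Matrix.of ![γ t, deriv γ t, deriv (deriv γ) t, p]).det)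
    :
    ∀ t, κγ t ^ 2 * Real.sin (η t) ^ 2 ≤ w t ^ 4 * κg t ^ 2 := by
  intro t
  obtain ⟨hγdiff, hγ'cd⟩ := contDiff_infty_iff_deriv.mp hγsm
  obtain ⟨hγ'diff, -⟩ := contDiff_infty_iff_deriv.mp hγ'cd
  obtain ⟨hηdiff, hη'cd⟩ := contDiff_infty_iff_deriv.mp hηsm
  obtain ⟨hη'diff, -⟩ := contDiff_infty_iff_deriv.mp hη'cd
  have Hγ : ∀ u, HasDerivAt γ (deriv γ u) u := fun u => (hγdiff u).hasDerivAt
  have Hγ' : ∀ u, HasDerivAt (deriv γ) (deriv (deriv γ) u) u := fun u => (hγ'diff u).hasDerivAt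
  have Hη : ∀ u, HasDerivAt η (deriv η u) u := fun u => (hηdiff u).hasDerivAt
  have Hη' : ∀ u, HasDerivAt (deriv η) (deriv (deriv η) u) u := fun u => (hη'diff u).hasDerivAt
  -- basic mdot derivative facts for γ
  have m1 : ∀ u, mdot (γ u) (deriv γ u) = 0 := by
    intro u
    have h := mdot_hasDerivAt (Hγ u) (Hγ u)
    have h0 : HasDerivAt (fun v => mdot (γ v) (γ v)) 0 u := by
      have he : (fun v => mdot (γ v) (γ v)) = fun _ => (1:ℝ) := funext hγ1
      rw [he]; exact hasDerivAt_const u 1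
    have h2 := h.unique h0
    have hs := mdot_symm (deriv γ u) (γ u)
    linarith
  have m2 : ∀ u, mdot (deriv γ u) p = 0 := by
    intro u
    have h := mdot_hasDerivAt (Hγ u) (hasDerivAt_const u p)
    have h0 : HasDerivAt (fun v => mdot (γ v) p) 0 u := by
      have he : (fun v => mdot (γ v) p) = fun _ => (0:ℝ) := funext hγp
      rw [he]; exact hasDerivAt_const u 0
    have h2 := h.unique h0
    have hz : mdot (γ u) (0 : Fin 4 → ℝ) = 0 := by simp [mdot]
    linarith
  have m3 : mdot (γ t) (deriv (deriv γ) t) = 1 := by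
    have h := mdot_hasDerivAt (Hγ t) (Hγ' t)
    have h0 : HasDerivAt (fun v => mdot (γ v) (deriv γ v)) 0 t := by
      have he : (fun v => mdot (γ v) (deriv γ v)) = fun _ => (0:ℝ) := funext m1
      rw [he]; exact hasDerivAt_const t 0
    have h2 := h.unique h0
    have := hγ' t
    linarith
  have m4 : mdot (deriv γ t) (deriv (deriv γ) t) = 0 := by
    have h := mdot_hasDerivAt (Hγ' t) (Hγ' t)
    have h0 : HasDerivAt (fun v => mdot (deriv γ v) (deriv γ v)) 0 t := by
      have he : (fun v => mdot (deriv γ v) (deriv γ v)) = fun _ => (-1:ℝ) := funext hγ'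
      rw [he]; exact hasDerivAt_const t (-1)
    have h2 := h.unique h0
    have hs := mdot_symm (deriv (deriv γ) t) (deriv γ t)
    linarith
  have m5 : mdot (deriv (deriv γ) t) p = 0 := by
    have h := mdot_hasDerivAt (Hγ' t) (hasDerivAt_const t p)
    have h0 : HasDerivAt (fun v => mdot (deriv γ v) p) 0 t := by
      have he : (fun v => mdot (deriv γ v) p) = fun _ => (0:ℝ) := funext m2
      rw [he]; exact hasDerivAt_const t 0
    have h2 := h.unique h0
    have hz : mdot (deriv γ t) (0 : Fin 4 → ℝ) = 0 := by simp [mdot]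
    linarith
  -- geodesic curvature of γ via the Gram determinant
  have hκ2 : κγ t ^ 2 = (mdot (deriv (deriv γ) t) (deriv (deriv γ) t)) - 1 := by
    rw [hκγ t]
    exact det_sq_gram (γ t) (deriv γ t) (deriv (deriv γ) t) p (mdot (deriv (deriv γ) t) (deriv (deriv γ) t))
      (hγ1 t) (m1 t) m3 (hγp t) (hγ' t) m4 (m2 t) rfl m5 hp
  -- derivatives of α
  have hαfun : α = fun v => Real.cos (η v) • p + Real.sin (η v) • γ v := funext hα
  have hcos : ∀ u, HasDerivAt (fun v => Real.cos (η v)) (-Real.sin (η u) * deriv η u) u :=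
    fun u => (Real.hasDerivAt_cos (η u)).comp u (Hη u)
  have hsin : ∀ u, HasDerivAt (fun v => Real.sin (η v)) (Real.cos (η u) * deriv η u) u :=
    fun u => (Real.hasDerivAt_sin (η u)).comp u (Hη u)
  have HA1 : ∀ u, HasDerivAt α
      ((-Real.sin (η u) * deriv η u) • p + (Real.cos (η u) * deriv η u) • γ u
        + Real.sin (η u) • deriv γ u) u := by
    intro u
    rw [hαfun]
    have h := ((hcos u).smul_const p).add ((hsin u).smul (Hγ u))
    refine h.congr_deriv ?_
    funext i
    simp [Pi.add_apply, Pi.smul_apply, smul_eq_mul]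
    ring
  have hderivα : deriv α = fun u => (-Real.sin (η u) * deriv η u) • p
      + (Real.cos (η u) * deriv η u) • γ u + Real.sin (η u) • deriv γ u :=
    funext fun u => (HA1 u).deriv
  have hc1 : HasDerivAt (fun u => -Real.sin (η u) * deriv η u)
      (-(Real.cos (η t) * deriv η t) * deriv η t + (-Real.sin (η t)) * deriv (deriv η) t) t :=
    ((hsin t).neg.mul (Hη' t))
  have hc2' : HasDerivAt (fun u => Real.cos (η u) * deriv η u)
      ((-Real.sin (η t) * deriv η t) * deriv η t + Real.cos (η t) * deriv (deriv η) t) t :=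
    ((hcos t).mul (Hη' t))
  have HA2 : HasDerivAt (deriv α)
      ((-(deriv (deriv η) t * Real.sin (η t)) - (deriv η t)^2 * Real.cos (η t)) • p
        + (deriv (deriv η) t * Real.cos (η t) - (deriv η t)^2 * Real.sin (η t)) • γ t
        + (2 * deriv η t * Real.cos (η t)) • deriv γ t
        + Real.sin (η t) • deriv (deriv γ) t) t := by
    rw [hderivα]
    have h := ((hc1.smul_const p).add (hc2'.smul (Hγ t))).add ((hsin t).smul (Hγ' t))
    refine h.congr_deriv ?_
    funext i
    simp [Pi.add_apply, Pi.smul_apply, smul_eq_mul]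
    ring
  -- derivative of w
  have hargpos : 0 < Real.sin (η t) ^ 2 - (deriv η t) ^ 2 := by
    have := htimelike t; linarith
  have hwpos : 0 < w t := by
    rw [hw]; exact Real.sqrt_pos.mpr hargpos
  have hwne : w t ≠ 0 := ne_of_gt hwpos
  have hwfun : w = fun u => Real.sqrt (Real.sin (η u) ^ 2 - (deriv η u) ^ 2) := funext hw
  have hFd : HasDerivAt (fun u => Real.sin (η u) ^ 2 - (deriv η u) ^ 2)
      (2 * Real.sin (η t) * Real.cos (η t) * deriv η t - 2 * deriv η t * deriv (deriv η) t) t := by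
    have h := ((hsin t).pow 2).sub ((Hη' t).pow 2)
    refine h.congr_deriv ?_
    push_cast
    ring
  have HW : HasDerivAt w ((2 * Real.sin (η t) * Real.cos (η t) * deriv η t
      - 2 * deriv η t * deriv (deriv η) t) / (2 * w t)) t := by
    rw [hwfun]
    exact hFd.sqrt (ne_of_gt hargpos)
  have hW2 : (w t)^2 = Real.sin (η t) ^ 2 - (deriv η t) ^ 2 := by
    rw [hw]; exact Real.sq_sqrt hargpos.le
  have hWWp : w t * ((2 * Real.sin (η t) * Real.cos (η t) * deriv η t
      - 2 * deriv η t * deriv (deriv η) t) / (2 * w t))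
      = Real.sin (η t) * Real.cos (η t) * deriv η t - deriv η t * deriv (deriv η) t := by
    field_simp
  -- derivative of T
  have hTfun : T = fun u => (w u)⁻¹ • deriv α u := funext hT
  have hinv : HasDerivAt (fun u => (w u)⁻¹)
      (-((2 * Real.sin (η t) * Real.cos (η t) * deriv η t
        - 2 * deriv η t * deriv (deriv η) t) / (2 * w t)) / (w t)^2) t := HW.inv hwne
  have HT : HasDerivAt T ((w t)⁻¹ • ((-(deriv (deriv η) t * Real.sin (η t)) - (deriv η t)^2 * Real.cos (η t)) • p
        + (deriv (deriv η) t * Real.cos (η t) - (deriv η t)^2 * Real.sin (η t)) • γ t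
        + (2 * deriv η t * Real.cos (η t)) • deriv γ t
        + Real.sin (η t) • deriv (deriv γ) t)
      + (-((2 * Real.sin (η t) * Real.cos (η t) * deriv η t
        - 2 * deriv η t * deriv (deriv η) t) / (2 * w t)) / (w t)^2) • deriv α t) t := by
    rw [hTfun]
    exact hinv.smul HA2
  -- the scaled normal vector and its two mdot evaluations
  have hD : deriv T t - w t • α t = (w t * κg t) • N t := by
    rw [hF1 t]
    funext i
    simp [Pi.add_apply, Pi.sub_apply, Pi.smul_apply, smul_eq_mul]
    ring
  have hV2 : (w t)^2 • (deriv T t - w t • α t) = ((w t)^3 * κg t) • N t := by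
    rw [hD]
    funext i
    simp [Pi.smul_apply, smul_eq_mul]
    ring
  have hVV : mdot ((w t)^2 • (deriv T t - w t • α t)) ((w t)^2 • (deriv T t - w t • α t))
      = (w t)^6 * κg t^2 := by
    rw [hV2, mdot_smul_self, hN1 t]
    ring
  have hVbasis : (w t)^2 • (deriv T t - w t • α t)
      = (((2 * Real.sin (η t) * Real.cos (η t) * deriv η t - 2 * deriv η t * deriv (deriv η) t) / (2 * w t))*(deriv η t)*(Real.sin (η t)) + w t*(-((deriv (deriv η) t)*(Real.sin (η t))) - ((deriv η t))^2*(Real.cos (η t))) - (w t)^3*(Real.cos (η t))) • p + (-(((2 * Real.sin (η t) * Real.cos (η t) * deriv η t - 2 * deriv η t * deriv (deriv η) t) / (2 * w t))*(deriv η t)*(Real.cos (η t))) + w t*((deriv (deriv η) t)*(Real.cos (η t)) - ((deriv η t))^2*(Real.sin (η t))) - (w t)^3*(Real.sin (η t))) • γ t + (-(((2 * Real.sin (η t) * Real.cos (η t) * deriv η t - 2 * deriv η t * deriv (deriv η) t) / (2 * w t))*(Real.sin (η t))) + 2*w t*(deriv η t)*(Real.cos (η t))) • deriv γ t + (w t*(Real.sin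 (η t))) • deriv (deriv γ) t := by
    rw [HT.deriv, (HA1 t).deriv, hα t]
    funext i
    simp only [Pi.add_apply, Pi.sub_apply, Pi.smul_apply, smul_eq_mul]
    field_simp
    ring
  have hpγ : mdot p (γ t) = 0 := (mdot_symm p (γ t)).trans (hγp t)
  have hpγ' : mdot p (deriv γ t) = 0 := (mdot_symm p (deriv γ t)).trans (m2 t)
  have hpγ'' : mdot p (deriv (deriv γ) t) = 0 := (mdot_symm p (deriv (deriv γ) t)).trans m5
  have hmain : (w t)^6 * κg t^2 = (((2 * Real.sin (η t) * Real.cos (η t) * deriv η t - 2 * deriv η t * deriv (deriv η) t) / (2 * w t))*(deriv η t)*(Real.sin (η t)) + w t*(-((deriv (deriv η) t)*(Real.sin (η t))) - ((deriv η t))^2*(Real.cos (η t))) - (w t)^3*(Real.cos (η t)))^2 + (-(((2 * Real.sin (η t) * Real.cos (η t) * deriv η t - 2 * deriv η t * deriv (deriv η) t) / (2 * w t))*(deriv η t)*(Real.cos (η t))) + w t*((deriv (deriv η) t)*(Real.cos (η t)) - ((deriv η t))^2*(Real.sin (η t))) - (w t)^3*(Real.sin (η t)))^2 - (-(((2 *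 Real.sin (η t) * Real.cos (η t) * deriv η t - 2 * deriv η t * deriv (deriv η) t) / (2 * w t))*(Real.sin (η t))) + 2*w t*(deriv η t)*(Real.cos (η t)))^2 + 2*(-(((2 * Real.sin (η t) * Real.cos (η t) * deriv η t - 2 * deriv η t * deriv (deriv η) t) / (2 * w t))*(deriv η t)*(Real.cos (η t))) + w t*((deriv (deriv η) t)*(Real.cos (η t)) - ((deriv η t))^2*(Real.sin (η t))) - (w t)^3*(Real.sin (η t)))*(w t*(Real.sin (η t))) + (w t*(Real.sin (η t)))^2*(mdot (deriv (deriv γ) t) (deriv (deriv γ) t)) := by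
    rw [← hVV, hVbasis, mdot_comb, hp, hpγ, hpγ', hpγ'', hγ1 t, m1 t, m3, hγ' t, m4]
    ring
  exact scalar_key (w t) ((2 * Real.sin (η t) * Real.cos (η t) * deriv η t
      - 2 * deriv η t * deriv (deriv η) t) / (2 * w t)) (Real.sin (η t)) (Real.cos (η t))
      (deriv η t) (deriv (deriv η) t) (mdot (deriv (deriv γ) t) (deriv (deriv γ) t)) (κγ t) (κg t)
      hwpos hW2 (Real.sin_sq_add_cos_sq (η t)) hWWp hκ2 hmain
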